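/- For every RDF graph G, every non-recursive SHACL document M, and any two of the four extended semantics α and β among brave-partial, brave-total, cautious-partial and cautious-total: G is valid with respect to M under α if and only if G is valid with respect to M under β. -/
import Mathlib


/-!
STATEMENT 2.  For every graph and every non-recursive SHACL document, the four
extended semantics (brave-partial, brave-total, cautious-partial,
cautious-total) coincide.
-/

namespace SHACL

/-- RDF nodes: a single infinite domain of RDF terms. -/
abbrev Node := ℕ

/-- Shape names. -/
abbrev SName := ℕ

/-- An RDF graph: a set of (subject, predicate, object) triples. -/
abbrev Graph := Set (Node × Node × Node)

/-- Kleene's three truth values. -/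
inductive K3 | t | f | u
deriving DecidableEq

/-- An assignment maps each node and shape name to `some true` (the shape
literal `s` is assigned), `some false` (the literal `¬s` is assigned) or
`none` (neither); this representation guarantees that `s` and `¬s` are never
assigned simultaneously. -/
abbrev Assignment := Node → SName → Option Bool

/-- SHACL constraints (abstract core syntax): the empty constraint, shape
references, equality with a constant, a graph atom (existence of a given
triple), existential quantification along a property, negation and
conjunction. -/
inductive Constraint
  | top
  | ref (s : SName)
  | eqc (c : Node)
  | hasTriple (p o : Node)
  | exPath (p : Node) (d : Constraint)
  | not (d : Constraint)
  | and (d₁ d₂ : Constraint)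

open Classical in
/-- Three-valued (Kleene) evaluation `⟦d⟧^{G,σ}(n)` of a constraint at a node:
a shape reference `s(x)` is `True` if `s ∈ σ(x)`, `False` if `¬s ∈ σ(x)` and
`Undefined` otherwise. -/
noncomputable def eval (G : Graph) (σ : Assignment) : Constraint → Node → K3
  | .top, _ => .t
  | .ref s, n =>
      match σ n s with
      | some true => .t
      | some false => .f
      | none => .u
  | .eqc c, n => if n = c then .t else .f
  | .hasTriple p o, n => if (n, p, o) ∈ G then .t else .f
  | .exPath p d, n =>
      if ∃ m, (n, p, m) ∈ G ∧ eval G σ d m = .t then .t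
      else if ∀ m, (n, p, m) ∈ G → eval G σ d m = .f then .f
      else .u
  | .not d, n =>
      match eval G σ d n with
      | .t => .f
      | .f => .t
      | .u => .u
  | .and d₁ d₂, n =>
      match eval G σ d₁ n, eval G σ d₂ n with
      | .f, _ => .f
      | _, .f => .f
      | .t, .t => .t
      | _, _ => .u

/-- A SHACL shape: a name, a target definition (a unary query over graphs)
and a constraint. -/
structure Shape where
  name : SName
  target : Graph → Set Node
  constraint : Constraint

/-- A SHACL document: a set of shapes. -/
abbrev Document := Set Shape

/-- `M̃`: the document `M` with every target definition replaced by the empty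
target. -/
def minusTargets (M : Document) : Document :=
  (fun sh => { name := sh.name, target := fun _ => (∅ : Set Node),
               constraint := sh.constraint : Shape }) '' M

/-- Faithfulness of an assignment `σ` w.r.t. a graph `G` and a document `M`:
(1) for every shape `⟨s,t,d⟩` of `M` and node `n`, `s ∈ σ(n)` iff
    `⟦d⟧^{G,σ}(n) = True` and `¬s ∈ σ(n)` iff `⟦d⟧^{G,σ}(n) = False`;
(2) every node targeted by `t` in `G` satisfies `s ∈ σ(n)`. -/
def Faithful (G : Graph) (σ : Assignment) (M : Document) : Prop :=
  (∀ sh ∈ M, ∀ n : Node,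
      (σ n sh.name = some true ↔ eval G σ sh.constraint n = .t) ∧
      (σ n sh.name = some false ↔ eval G σ sh.constraint n = .f)) ∧
  (∀ sh ∈ M, ∀ n ∈ sh.target G, σ n sh.name = some true)

/-- The shape names directly referenced by a constraint. -/
def Constraint.refs : Constraint → Set SName
  | .ref s => {s}
  | .not d => d.refs
  | .and d₁ d₂ => d₁.refs ∪ d₂.refs
  | .exPath _ d => d.refs
  | _ => ∅

/-- The shape names of a document. -/
def namesOf (M : Document) : Set SName := Shape.name '' M

/-- `s₁` directly references `s₂` in `M`: some shape of `M` named `s₁` has a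
constraint mentioning `s₂`. -/
def refersTo (M : Document) (s₁ s₂ : SName) : Prop :=
  ∃ sh ∈ M, sh.name = s₁ ∧ s₂ ∈ sh.constraint.refs

/-- A document is recursive if some shape (transitively) references itself. -/
def Recursive (M : Document) : Prop :=
  ∃ s, Relation.TransGen (refersTo M) s s

/-- An assignment is total w.r.t. a set of shape names if it assigns either
`s` or `¬s` to every node, for every shape name `s` in the set. -/
def Assignment.TotalOn (σ : Assignment) (S : Set SName) : Prop :=
  ∀ n : Node, ∀ s ∈ S, (σ n s).isSome


/-- The four extended semantics for (possibly recursive) SHACL. -/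
inductive Semantics | bravePartial | braveTotal | cautiousPartial | cautiousTotal

/-- Validity of a graph w.r.t. a document under each of the four extended
semantics. -/
def Valid : Semantics → Graph → Document → Prop
  | .bravePartial, G, M => ∃ σ : Assignment, Faithful G σ M
  | .braveTotal, G, M => ∃ σ : Assignment, σ.TotalOn (namesOf M) ∧ Faithful G σ M
  | .cautiousPartial, G, M =>
      (∃ σ : Assignment, Faithful G σ M) ∧
      (∀ σ : Assignment, Faithful G σ (minusTargets M) → Faithful G σ M)
  | .cautiousTotal, G, M =>
      (∃ σ : Assignment, σ.TotalOn (namesOf M) ∧ Faithful G σ M) ∧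
      (∀ σ : Assignment, σ.TotalOn (namesOf M) →
          Faithful G σ (minusTargets M) → Faithful G σ M)

/-! ### Auxiliary development -/

/-- Condition (1) of faithfulness alone. -/
def Cond1 (G : Graph) (σ : Assignment) (M : Document) : Prop :=
  ∀ sh ∈ M, ∀ n : Node,
    (σ n sh.name = some true ↔ eval G σ sh.constraint n = .t) ∧
    (σ n sh.name = some false ↔ eval G σ sh.constraint n = .f)

/-- The dependency relation: `rel M a b` iff the shape named `b` references `a`. -/
def rel (M : Document) (a b : SName) : Prop := refersTo M b a

lemma eval_congr (G : Graph) {σ₁ σ₂ : Assignment} {d : Constraint}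
    (h : ∀ n s, s ∈ d.refs → σ₁ n s = σ₂ n s) :
    ∀ n, eval G σ₁ d n = eval G σ₂ d n := by
  induction d with
  | top => intro n; simp [eval]
  | ref s =>
      intro n
      simp only [eval, h n s (by simp [Constraint.refs])]
  | eqc c => intro n; simp [eval]
  | hasTriple p o => intro n; simp [eval]
  | exPath p d ih =>
      intro n
      have hfun : eval G σ₁ d = eval G σ₂ d := funext (ih h)
      simp only [eval]
      rw [hfun]
  | not d ih =>
      intro n
      simp only [eval]
      rw [ih h n]
  | and d₁ d₂ ih₁ ih₂ =>
      intro n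
      have h₁ : ∀ n s, s ∈ d₁.refs → σ₁ n s = σ₂ n s := fun n s hs =>
        h n s (Set.mem_union_left _ hs)
      have h₂ : ∀ n s, s ∈ d₂.refs → σ₁ n s = σ₂ n s := fun n s hs =>
        h n s (Set.mem_union_right _ hs)
      simp only [eval]
      rw [ih₁ h₁ n, ih₂ h₂ n]

lemma eval_ne_u (G : Graph) {σ : Assignment} {d : Constraint}
    (h : ∀ n s, s ∈ d.refs → (σ n s).isSome) :
    ∀ n, eval G σ d n ≠ .u := by
  induction d with
  | top => intro n; simp [eval]
  | ref s =>
      intro n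
      have := h n s (by simp [Constraint.refs])
      cases hσ : σ n s with
      | none => rw [hσ] at this; simp at this
      | some b => cases b <;> simp [eval, hσ]
  | eqc c => intro n; simp only [eval]; split <;> simp
  | hasTriple p o => intro n; simp only [eval]; split <;> simp
  | exPath p d ih =>
      intro n
      have hd := ih h
      simp only [eval]
      split
      · simp
      · split
        · simp
        · rename_i h1 h2
          exfalso
          apply h2
          intro m hm
          cases hk : eval G σ d m with
          | t => exact absurd ⟨m, hm, hk⟩ h1
          | f => rfl
          | u => exact absurd hk (hd m)
  | not d ih =>
      intro n
      have hd := ih h n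
      simp only [eval]
      cases hk : eval G σ d n <;> simp_all
  | and d₁ d₂ ih₁ ih₂ =>
      intro n
      have h₁ : ∀ n s, s ∈ d₁.refs → (σ n s).isSome := fun n s hs =>
        h n s (Set.mem_union_left _ hs)
      have h₂ : ∀ n s, s ∈ d₂.refs → (σ n s).isSome := fun n s hs =>
        h n s (Set.mem_union_right _ hs)
      have hd₁ := ih₁ h₁ n
      have hd₂ := ih₂ h₂ n
      simp only [eval]
      cases hk₁ : eval G σ d₁ n <;> cases hk₂ : eval G σ d₂ n <;> simp_all

/-- Coerce a (defined) truth value to an optional boolean. -/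
def res : K3 → Option Bool
  | .t => some true
  | .f => some false
  | .u => none

@[simp] lemma res_eq_some_true {k : K3} : res k = some true ↔ k = .t := by
  cases k <;> simp [res]

@[simp] lemma res_eq_some_false {k : K3} : res k = some false ↔ k = .f := by
  cases k <;> simp [res]

@[simp] lemma res_isSome {k : K3} : (res k).isSome ↔ k ≠ .u := by
  cases k <;> simp [res]

lemma rel_wf (G : Graph) (M : Document) (hfin : M.Finite)
    (hclosed : ∀ sh ∈ M, Constraint.refs sh.constraint ⊆ namesOf M)
    (hnr : ¬ Recursive M) : WellFounded (rel M) := by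
  have hS : (namesOf M).Finite := hfin.image _
  haveI := hS.to_subtype
  let r' : ↥(namesOf M) → ↥(namesOf M) → Prop :=
    fun a b => Relation.TransGen (rel M) a.1 b.1
  haveI : IsTrans ↥(namesOf M) r' := ⟨fun _ _ _ h₁ h₂ => h₁.trans h₂⟩
  haveI : IsIrrefl ↥(namesOf M) r' :=
    ⟨fun a ha => hnr ⟨a.1, Relation.transGen_swap.1 ha⟩⟩
  have hwf' : WellFounded r' := Finite.wellFounded_of_trans_of_irrefl r'
  have key : ∀ x : ↥(namesOf M), Acc (rel M) x.1 := by
    intro x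
    induction x using hwf'.induction with
    | _ x IH =>
      constructor
      intro a ha
      obtain ⟨sh, hsh, -, hrefs⟩ := id ha
      exact IH ⟨a, hclosed sh hsh hrefs⟩ (Relation.TransGen.single ha)
  constructor
  intro s
  by_cases hs : s ∈ namesOf M
  · exact key ⟨s, hs⟩
  · constructor
    intro a ha
    exact absurd ⟨ha.choose, ha.choose_spec.1, ha.choose_spec.2.1⟩ hs

open scoped Classical in
/-- One step of the canonical assignment construction. -/
noncomputable def canonF (G : Graph) (M : Document) (s : SName)
    (ih : ∀ s', rel M s' s → Node → Option Bool) : Node → Option Bool :=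
  if h : ∃ sh ∈ M, sh.name = s then
    fun n => res (eval G
      (fun n' s' => if h' : rel M s' s then ih s' h' n' else none)
      h.choose.constraint n)
  else fun _ => none

/-- The canonical assignment, defined by well-founded recursion along the
dependency order of the document. -/
noncomputable def canon (G : Graph) (M : Document) (hwf : WellFounded (rel M)) :
    SName → Node → Option Bool :=
  hwf.fix (canonF G M)

/-- The canonical assignment, as an `Assignment`. -/
noncomputable def canonA (G : Graph) (M : Document) (hwf : WellFounded (rel M)) :
    Assignment := fun n s => canon G M hwf s n

lemma canon_spec (G : Graph) (M : Document) (hwf : WellFounded (rel M))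
    (hname : ∀ sh₁ ∈ M, ∀ sh₂ ∈ M, Shape.name sh₁ = Shape.name sh₂ → sh₁ = sh₂)
    {sh : Shape} (hsh : sh ∈ M) (n : Node) :
    canonA G M hwf n sh.name = res (eval G (canonA G M hwf) sh.constraint n) := by
  classical
  have hex : ∃ sh' ∈ M, sh'.name = sh.name := ⟨sh, hsh, rfl⟩
  have hch : hex.choose = sh :=
    hname _ hex.choose_spec.1 _ hsh hex.choose_spec.2
  have hcongr : ∀ n' s', s' ∈ sh.constraint.refs →
      (fun n' s' => if _ : rel M s' sh.name then canon G M hwf s' n' else none) n' s'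
        = canonA G M hwf n' s' := by
    intro n' s' hs'
    have hr : rel M s' sh.name := ⟨sh, hsh, rfl, hs'⟩
    simp only [dif_pos hr]
    rfl
  have heq : canon G M hwf sh.name
      = canonF G M sh.name (fun s' _ => canon G M hwf s') := by
    rw [canon]
    exact WellFounded.fix_eq _ _ _
  calc canonA G M hwf n sh.name
      = res (eval G
        (fun n' s' => if _ : rel M s' sh.name then canon G M hwf s' n' else none)
        hex.choose.constraint n) := by
        show canon G M hwf sh.name n = _
        rw [heq, canonF, dif_pos hex]
    _ = res (eval G (canonA G M hwf) sh.constraint n) := by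
        rw [hch, eval_congr G hcongr n]

lemma canon_cond1 (G : Graph) (M : Document) (hwf : WellFounded (rel M))
    (hname : ∀ sh₁ ∈ M, ∀ sh₂ ∈ M, Shape.name sh₁ = Shape.name sh₂ → sh₁ = sh₂) :
    Cond1 G (canonA G M hwf) M := by
  intro sh hsh n
  rw [canon_spec G M hwf hname hsh n]
  constructor <;> simp

lemma canon_total (G : Graph) (M : Document) (hwf : WellFounded (rel M))
    (hname : ∀ sh₁ ∈ M, ∀ sh₂ ∈ M, Shape.name sh₁ = Shape.name sh₂ → sh₁ = sh₂)
    (hclosed : ∀ sh ∈ M, Constraint.refs sh.constraint ⊆ namesOf M) :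
    (canonA G M hwf).TotalOn (namesOf M) := by
  have key : ∀ s, s ∈ namesOf M → ∀ n, (canonA G M hwf n s).isSome := by
    intro s
    induction s using hwf.induction with
    | _ s IH =>
      intro hs n
      obtain ⟨sh, hsh, rfl⟩ := hs
      rw [canon_spec G M hwf hname hsh n]
      rw [res_isSome]
      apply eval_ne_u G _ n
      intro n' s' hs'
      exact IH s' ⟨sh, hsh, rfl, hs'⟩ (hclosed sh hsh hs') n'
  intro n s hs
  exact key s hs n

lemma cond1_unique (G : Graph) (M : Document) (hwf : WellFounded (rel M))
    (hname : ∀ sh₁ ∈ M, ∀ sh₂ ∈ M, Shape.name sh₁ = Shape.name sh₂ → sh₁ = sh₂)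
    (hclosed : ∀ sh ∈ M, Constraint.refs sh.constraint ⊆ namesOf M)
    {σ : Assignment} (hσ : Cond1 G σ M) :
    ∀ s ∈ namesOf M, ∀ n, σ n s = canonA G M hwf n s := by
  have key : ∀ s, s ∈ namesOf M → ∀ n, σ n s = canonA G M hwf n s := by
    intro s
    induction s using hwf.induction with
    | _ s IH =>
      intro hs n
      obtain ⟨sh, hsh, rfl⟩ := hs
      have hagree : ∀ n' s', s' ∈ sh.constraint.refs → σ n' s' = canonA G M hwf n' s' := by
        intro n' s' hs'
        exact IH s' ⟨sh, hsh, rfl, hs'⟩ (hclosed sh hsh hs') n'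
      have heval : eval G σ sh.constraint n = eval G (canonA G M hwf) sh.constraint n :=
        eval_congr G hagree n
      have hnu : eval G (canonA G M hwf) sh.constraint n ≠ .u := by
        rw [← res_isSome, ← canon_spec G M hwf hname hsh n]
        exact canon_total G M hwf hname hclosed n sh.name ⟨sh, hsh, rfl⟩
      have hc := canon_cond1 G M hwf hname sh hsh n
      have hc' := hσ sh hsh n
      cases hk : eval G (canonA G M hwf) sh.constraint n with
      | t => rw [(hc'.1).2 (heval.trans hk), (hc.1).2 hk]
      | f => rw [(hc'.2).2 (heval.trans hk), (hc.2).2 hk]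
      | u => exact absurd hk hnu
  exact key

lemma faithful_minus_iff (G : Graph) (σ : Assignment) (M : Document) :
    Faithful G σ (minusTargets M) ↔ Cond1 G σ M := by
  unfold Faithful minusTargets Cond1
  constructor
  · rintro ⟨h1, -⟩ sh hsh n
    exact h1 _ ⟨sh, hsh, rfl⟩ n
  · intro h1
    constructor
    · rintro sh' ⟨sh, hsh, rfl⟩ n
      exact h1 sh hsh n
    · rintro sh' ⟨sh, hsh, rfl⟩ n hn
      exact absurd hn (Set.notMem_empty n)

lemma faithful_iff (G : Graph) (σ : Assignment) (M : Document) :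
    Faithful G σ M ↔ Cond1 G σ M ∧ (∀ sh ∈ M, ∀ n ∈ sh.target G, σ n sh.name = some true) :=
  Iff.rfl
/-- Theorem on non-recursive documents: for any graph `G`,
non-recursive SHACL document `M` and extended semantics `α` and `β`,
`G ⊨ M` under `α` iff `G ⊨ M` under `β`. -/
theorem nonRecursive_semantics_coincide
    (G : Graph) (M : Document)
    (hfin : M.Finite)
    (hname : ∀ sh₁ ∈ M, ∀ sh₂ ∈ M, Shape.name sh₁ = Shape.name sh₂ → sh₁ = sh₂)
    (hclosed : ∀ sh ∈ M, Constraint.refs sh.constraint ⊆ namesOf M)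
    (hnr : ¬ Recursive M)
    (α β : Semantics) :
    Valid α G M ↔ Valid β G M := by
  have hwf := rel_wf G M hfin hclosed hnr
  have hc1 := canon_cond1 G M hwf hname
  have htot := canon_total G M hwf hname hclosed
  have key : ∀ γ, Valid γ G M ↔
      (∀ sh ∈ M, ∀ n ∈ sh.target G, canonA G M hwf n sh.name = some true) := by
    intro γ
    have fwd : (∃ σ, Faithful G σ M) →
        (∀ sh ∈ M, ∀ n ∈ sh.target G, canonA G M hwf n sh.name = some true) := by
      rintro ⟨σ, hf⟩ sh hsh n hn
      obtain ⟨h1, h2⟩ := (faithful_iff G σ M).1 hf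
      rw [← cond1_unique G M hwf hname hclosed h1 sh.name ⟨sh, hsh, rfl⟩ n]
      exact h2 sh hsh n hn
    have bwd : (∀ sh ∈ M, ∀ n ∈ sh.target G, canonA G M hwf n sh.name = some true) →
        Faithful G (canonA G M hwf) M := fun hT => (faithful_iff G _ M).2 ⟨hc1, hT⟩
    have caut : (∀ sh ∈ M, ∀ n ∈ sh.target G, canonA G M hwf n sh.name = some true) →
        ∀ σ, Cond1 G σ M → Faithful G σ M := by
      intro hT σ h1
      refine (faithful_iff G σ M).2 ⟨h1, ?_⟩
      intro sh hsh n hn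
      rw [cond1_unique G M hwf hname hclosed h1 sh.name ⟨sh, hsh, rfl⟩ n]
      exact hT sh hsh n hn
    cases γ with
    | bravePartial => exact ⟨fwd, fun h => ⟨canonA G M hwf, bwd h⟩⟩
    | braveTotal =>
        exact ⟨fun ⟨σ, _, hf⟩ => fwd ⟨σ, hf⟩, fun h => ⟨canonA G M hwf, htot, bwd h⟩⟩
    | cautiousPartial =>
        constructor
        · exact fun ⟨he, _⟩ => fwd he
        · intro h
          exact ⟨⟨canonA G M hwf, bwd h⟩,
            fun σ hm => caut h σ ((faithful_minus_iff G σ M).1 hm)⟩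
    | cautiousTotal =>
        constructor
        · exact fun ⟨⟨σ, _, hf⟩, _⟩ => fwd ⟨σ, hf⟩
        · intro h
          exact ⟨⟨canonA G M hwf, htot, bwd h⟩,
            fun σ _ hm => caut h σ ((faithful_minus_iff G σ M).1 hm)⟩
  exact (key α).trans (key β).symm

end SHACL
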